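/- Let M ∈ ℕ, p ∈ [1,∞), and let K ⊆ [0,1]^M be a closed convex set. On the interval (0,M), define the projection Π(u) = (∫_{i-1}^{i} u dλ)_{i=1}^M ∈ ℝ^M and the set D_K of all u ∈ L^p(0,M) such that u has a representative v : (0,M) → ℝ with v(t) ∈ {0,1} for all t, pointwise total variation Var(v;(0,M)) ≤ M, and Π(u) ∈ K. Then {Π(u) : u ∈ D_K} = K, and consequently C_{D_K,Π} := conv{Π(u) : u ∈ D_K} = K. -/

import Mathlib

open MeasureTheory Set Filter
open scoped ENNReal

/-- The projection on `L^p(0,M)` given by `Π(u)_i = ∫_{i-1}^i u dλ`. -/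
noncomputable def projK (M : ℕ) (p : ℝ≥0∞)
    (u : Lp ℝ p (volume.restrict (Ioo (0:ℝ) (M:ℝ)))) : Fin M → ℝ :=
  fun i => ∫ t in Ioo ((i:ℕ):ℝ) (((i:ℕ):ℝ)+1), (u : ℝ → ℝ) t
    ∂(volume.restrict (Ioo (0:ℝ) (M:ℝ)))

/-- The set `D_K` of Example 3.5: binary controls on `(0,M)` with pointwise
total variation at most `M` whose vector of interval averages lies in `K`. -/
def DK (M : ℕ) (p : ℝ≥0∞) (K : Set (Fin M → ℝ)) :
    Set (Lp ℝ p (volume.restrict (Ioo (0:ℝ) (M:ℝ)))) :=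
  {u | (∃ v : ℝ → ℝ,
      ((u : ℝ → ℝ) =ᵐ[volume.restrict (Ioo (0:ℝ) (M:ℝ))] v) ∧
      (∀ t ∈ Ioo (0:ℝ) (M:ℝ), v t = 0 ∨ v t = 1) ∧
      eVariationOn v (Ioo (0:ℝ) (M:ℝ)) ≤ (M : ℝ≥0∞)) ∧
    projK M p u ∈ K}


section Aux
variable (M : ℕ) (x : Fin M → ℝ)

/-- switching points -/
noncomputable def sw (j : ℕ) : ℝ :=
  if h : j < M then
    (if Even j then (j:ℝ) + x ⟨j, h⟩ else (j:ℝ) + 1 - x ⟨j, h⟩)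
  else (j:ℝ)

/-- number of switching points below `t` -/
noncomputable def Ncnt (t : ℝ) : ℕ :=
  ∑ j ∈ Finset.range M, if sw M x j ≤ t then 1 else 0

/-- the binary control -/
noncomputable def vfun (t : ℝ) : ℝ := if Even (Ncnt M x t) then 1 else 0

variable {M x}

lemma sw_mem (hx : ∀ i, x i ∈ Icc (0:ℝ) 1) (j : ℕ) :
    (j:ℝ) ≤ sw M x j ∧ sw M x j ≤ (j:ℝ) + 1 := by
  unfold sw
  split_ifs with h he
  · have := hx ⟨j, h⟩
    constructor <;> [linarith [this.1]; linarith [this.2]]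
  · have := hx ⟨j, h⟩
    constructor <;> [linarith [this.2]; linarith [this.1]]
  · exact ⟨le_rfl, by linarith⟩

lemma Ncnt_mono : Monotone (Ncnt M x) := by
  intro a b hab
  apply Finset.sum_le_sum
  intro j _
  split_ifs with h1 h2
  · exact le_rfl
  · exact absurd (h1.trans hab) h2
  · omega
  · exact le_rfl

lemma Ncnt_le (t : ℝ) : Ncnt M x t ≤ M := by
  unfold Ncnt
  calc ∑ j ∈ Finset.range M, (if sw M x j ≤ t then 1 else 0)
      ≤ ∑ _j ∈ Finset.range M, 1 := by
        apply Finset.sum_le_sum; intro j _; split_ifs <;> omega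
    _ = M := by simp

lemma vfun_binary (t : ℝ) : vfun M x t = 0 ∨ vfun M x t = 1 := by
  unfold vfun; split_ifs <;> simp

lemma measurable_vfun : Measurable (vfun M x) := by
  have hN : Measurable (Ncnt M x) := by
    apply Finset.measurable_sum
    intro j _
    exact Measurable.ite (measurableSet_Ici (a := sw M x j)) measurable_const
      measurable_const
  have hset : MeasurableSet {t : ℝ | Even (Ncnt M x t)} := hN (MeasurableSet.of_discrete (s := {n : ℕ | Even n}))
  exact Measurable.ite hset measurable_const measurable_const

lemma edist_vfun_le {a b : ℝ} (hab : a ≤ b) :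
    edist (vfun M x b) (vfun M x a) ≤ ((Ncnt M x b - Ncnt M x a : ℕ) : ℝ≥0∞) := by
  rcases eq_or_lt_of_le (Ncnt_mono (x := x) hab) with h | h
  · have : vfun M x a = vfun M x b := by unfold vfun; rw [h]
    simp [this]
  · have h1 : (1 : ℝ≥0∞) ≤ ((Ncnt M x b - Ncnt M x a : ℕ) : ℝ≥0∞) := by
      have : 1 ≤ Ncnt M x b - Ncnt M x a := by omega
      exact_mod_cast this
    refine le_trans ?_ h1
    rcases vfun_binary (M := M) (x := x) a with ha | ha <;>
      rcases vfun_binary (M := M) (x := x) b with hb | hb <;>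
      simp [edist_dist, ha, hb, Real.dist_eq, ENNReal.ofReal_le_one] <;> norm_num

lemma eVariationOn_vfun_le : eVariationOn (vfun M x) (Ioo (0:ℝ) (M:ℝ)) ≤ (M : ℝ≥0∞) := by
  apply iSup_le
  rintro ⟨n, u, hu, -⟩
  calc ∑ i ∈ Finset.range n, edist (vfun M x (u (i + 1))) (vfun M x (u i))
      ≤ ∑ i ∈ Finset.range n, ((Ncnt M x (u (i+1)) - Ncnt M x (u i) : ℕ) : ℝ≥0∞) := by
        apply Finset.sum_le_sum
        intro i _
        exact edist_vfun_le (hu (Nat.le_succ i))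
    _ = ((∑ i ∈ Finset.range n, (Ncnt M x (u (i+1)) - Ncnt M x (u i)) : ℕ) : ℝ≥0∞) :=
        (Nat.cast_sum _ _).symm
    _ ≤ (M : ℝ≥0∞) := by
        rw [Finset.sum_range_tsub (fun a b hab => Ncnt_mono (hu hab))]
        exact_mod_cast le_trans (Nat.sub_le _ _) (Ncnt_le (u n))


lemma Ncnt_on_interval (hx : ∀ i, x i ∈ Icc (0:ℝ) 1) {i : ℕ} (hi : i < M) {t : ℝ}
    (ht : t ∈ Ioo (i:ℝ) ((i:ℝ)+1)) :
    Ncnt M x t = i + (if sw M x i ≤ t then 1 else 0) := by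
  unfold Ncnt
  have h1 : ∑ j ∈ Finset.Ico 0 (i+1), (if sw M x j ≤ t then 1 else 0)
      + ∑ j ∈ Finset.Ico (i+1) M, (if sw M x j ≤ t then 1 else 0)
      = ∑ j ∈ Finset.Ico 0 M, (if sw M x j ≤ t then 1 else 0) :=
    Finset.sum_Ico_consecutive _ (by omega) (by omega)
  have h2 : ∑ j ∈ Finset.Ico (i+1) M, (if sw M x j ≤ t then 1 else 0) = 0 := by
    apply Finset.sum_eq_zero
    intro j hj
    have hj' : (i:ℝ) + 1 ≤ (j:ℝ) := by
      have := (Finset.mem_Ico.mp hj).1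
      exact_mod_cast this
    have : ¬ sw M x j ≤ t := by
      have := (sw_mem hx j).1
      have := ht.2
      push_neg
      linarith
    simp [this]
  have h3 : ∑ j ∈ Finset.Ico 0 (i+1), (if sw M x j ≤ t then 1 else 0)
      = i + (if sw M x i ≤ t then 1 else 0) := by
    have : Finset.Ico 0 (i+1) = Finset.range (i+1) := by
      rw [Finset.range_eq_Ico]
    rw [this, Finset.sum_range_succ]
    congr 1
    have : ∀ j ∈ Finset.range i, (if sw M x j ≤ t then 1 else 0) = 1 := by
      intro j hj
      have hj' : (j:ℝ) + 1 ≤ (i:ℝ) := by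
        have := Finset.mem_range.mp hj
        exact_mod_cast this
      have : sw M x j ≤ t := by
        have := (sw_mem hx j).2
        have := ht.1
        linarith
      simp [this]
    rw [Finset.sum_congr rfl this]
    simp
  rw [Finset.range_eq_Ico, ← h1, h2, h3]
  omega

lemma integral_vfun (hx : ∀ i, x i ∈ Icc (0:ℝ) 1) {i : ℕ} (hi : i < M) :
    ∫ t in Ioo (i:ℝ) ((i:ℝ)+1), vfun M x t = x ⟨i, hi⟩ := by
  have hxi := hx ⟨i, hi⟩
  have hswl := (sw_mem hx i).1
  have hswu := (sw_mem hx i).2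
  rcases Nat.even_or_odd i with he | ho
  · -- even case : vfun = 1 exactly on (i, sw)
    have hsw : sw M x i = (i:ℝ) + x ⟨i, hi⟩ := by
      unfold sw; rw [dif_pos hi, if_pos he]
    have hv : ∀ t ∈ Ioo (i:ℝ) ((i:ℝ)+1),
        vfun M x t = Set.indicator (Iio (sw M x i)) (fun _ => (1:ℝ)) t := by
      intro t ht
      have hN := Ncnt_on_interval hx hi ht
      unfold vfun
      by_cases hle : sw M x i ≤ t
      · have hN1 : Ncnt M x t = i + 1 := by rw [hN, if_pos hle]
        have hpar : ¬ Even (Ncnt M x t) := by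
          rw [hN1, Nat.even_add_one]; exact not_not_intro he
        rw [if_neg hpar, Set.indicator_of_notMem (by simpa using hle)]
      · have hN1 : Ncnt M x t = i := by rw [hN, if_neg hle, Nat.add_zero]
        have hpar : Even (Ncnt M x t) := by rw [hN1]; exact he
        rw [if_pos hpar, Set.indicator_of_mem (by simpa using lt_of_not_ge hle)]
    rw [setIntegral_congr_fun measurableSet_Ioo hv,
      setIntegral_indicator measurableSet_Iio]
    have hinter : Ioo (i:ℝ) ((i:ℝ)+1) ∩ Iio (sw M x i) = Ioo (i:ℝ) (sw M x i) := by
      rw [Set.Ioo_inter_Iio, min_eq_right hswu]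
    rw [hinter, setIntegral_const, measureReal_def, Real.volume_Ioo, smul_eq_mul, mul_one,
      ENNReal.toReal_ofReal (by linarith), hsw]
    ring
  · -- odd case : vfun = 1 exactly on [sw, i+1)
    have hsw : sw M x i = (i:ℝ) + 1 - x ⟨i, hi⟩ := by
      unfold sw; rw [dif_pos hi, if_neg (Nat.not_even_iff_odd.mpr ho)]
    have hv : ∀ t ∈ Ioo (i:ℝ) ((i:ℝ)+1),
        vfun M x t = Set.indicator (Ici (sw M x i)) (fun _ => (1:ℝ)) t := by
      intro t ht
      have hN := Ncnt_on_interval hx hi ht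
      unfold vfun
      by_cases hle : sw M x i ≤ t
      · have hN1 : Ncnt M x t = i + 1 := by rw [hN, if_pos hle]
        have hpar : Even (Ncnt M x t) := by
          rw [hN1, Nat.even_add_one]; exact Nat.not_even_iff_odd.mpr ho
        rw [if_pos hpar, Set.indicator_of_mem (by simpa using hle)]
      · have hN1 : Ncnt M x t = i := by rw [hN, if_neg hle, Nat.add_zero]
        have hpar : ¬ Even (Ncnt M x t) := by
          rw [hN1]; exact Nat.not_even_iff_odd.mpr ho
        rw [if_neg hpar, Set.indicator_of_notMem (by simpa using hle)]
    rw [setIntegral_congr_fun measurableSet_Ioo hv,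
      setIntegral_indicator measurableSet_Ici]
    rcases le_or_gt (sw M x i) (i:ℝ) with hcase | hcase
    · have hinter : Ioo (i:ℝ) ((i:ℝ)+1) ∩ Ici (sw M x i) = Ioo (i:ℝ) ((i:ℝ)+1) := by
        apply Set.inter_eq_left.mpr
        intro t ht
        exact le_trans hcase (le_of_lt ht.1)
      rw [hinter, setIntegral_const, measureReal_def, Real.volume_Ioo, smul_eq_mul, mul_one]
      have hx1 : x ⟨i, hi⟩ = 1 := le_antisymm hxi.2 (by rw [hsw] at hcase; linarith)
      rw [hx1]
      rw [ENNReal.toReal_ofReal (by linarith)]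
      ring
    · have hinter : Ioo (i:ℝ) ((i:ℝ)+1) ∩ Ici (sw M x i) = Ico (sw M x i) ((i:ℝ)+1) := by
        ext t
        simp only [Set.mem_inter_iff, Set.mem_Ioo, Set.mem_Ici, Set.mem_Ico]
        constructor
        · rintro ⟨⟨-, h2⟩, h3⟩; exact ⟨h3, h2⟩
        · rintro ⟨h1, h2⟩; exact ⟨⟨lt_of_lt_of_le hcase h1, h2⟩, h1⟩
      rw [hinter, setIntegral_const, measureReal_def, Real.volume_Ico, smul_eq_mul, mul_one,
        ENNReal.toReal_ofReal (by linarith), hsw]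
      ring

end Aux


theorem stmt_9
    (M : ℕ) (hM : 0 < M) (p : ℝ≥0∞) [Fact (1 ≤ p)] (hp : p ≠ ⊤)
    (K : Set (Fin M → ℝ)) (hK_closed : IsClosed K) (hK_convex : Convex ℝ K)
    (hK_sub : K ⊆ Icc (0 : Fin M → ℝ) 1) :
    projK M p '' DK M p K = K ∧ convexHull ℝ (projK M p '' DK M p K) = K := by
  have hkey : projK M p '' DK M p K = K := by
    apply Subset.antisymm
    · rintro _ ⟨u, ⟨-, huK⟩, rfl⟩
      exact huK
    · intro x hxK
      have hx : ∀ i, x i ∈ Icc (0:ℝ) 1 := by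
        intro i
        have h := hK_sub hxK
        exact ⟨h.1 i, h.2 i⟩
      set μ := volume.restrict (Ioo (0:ℝ) (M:ℝ)) with hμ
      haveI : IsFiniteMeasure μ := ⟨by
        rw [hμ, Measure.restrict_apply_univ, Real.volume_Ioo]
        exact ENNReal.ofReal_lt_top⟩
      have hmem : MemLp (vfun M x) p μ :=
        MemLp.of_bound measurable_vfun.aestronglyMeasurable 1
          (ae_of_all _ (fun t => by
            rcases vfun_binary (M := M) (x := x) t with h | h <;> simp [h]))
      have hproj : projK M p (hmem.toLp (vfun M x)) = x := by
        funext i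
        unfold projK
        have hcoe : (hmem.toLp (vfun M x) : ℝ → ℝ) =ᵐ[μ] vfun M x := hmem.coeFn_toLp
        have hsub : Ioo ((i:ℕ):ℝ) (((i:ℕ):ℝ)+1) ⊆ Ioo (0:ℝ) (M:ℝ) := by
          intro t ht
          refine ⟨lt_of_le_of_lt (Nat.cast_nonneg _) ht.1, lt_of_lt_of_le ht.2 ?_⟩
          have h1 : (i:ℕ) + 1 ≤ M := i.isLt
          exact_mod_cast h1
        rw [setIntegral_congr_ae measurableSet_Ioo
          (by filter_upwards [hcoe] with t ht _; exact ht)]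
        have hres : μ.restrict (Ioo ((i:ℕ):ℝ) (((i:ℕ):ℝ)+1))
            = volume.restrict (Ioo ((i:ℕ):ℝ) (((i:ℕ):ℝ)+1)) := by
          rw [hμ, Measure.restrict_restrict measurableSet_Ioo,
            Set.inter_eq_left.mpr hsub]
        rw [hres, integral_vfun hx i.isLt, Fin.eta]
      refine ⟨hmem.toLp (vfun M x),
        ⟨⟨vfun M x, hmem.coeFn_toLp, fun t _ => vfun_binary t,
          eVariationOn_vfun_le⟩, ?_⟩, hproj⟩
      rw [hproj]; exact hxK
  exact ⟨hkey, by rw [hkey]; exact hK_convex.convexHull_eq⟩
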